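/- Let m > 0, let O, v_O, ω : ℝ → ℝ³ be differentiable with O'(t) = v_O(t), and define the (velocity-independent) potential U₃(t,x) = m v_O(t) · (ω(t) × (x − O(t))) + (m/2) ‖ω(t) × (x − O(t))‖². Then for every t ∈ ℝ and x ∈ ℝ³, the spatial gradient satisfies ∇_x U₃(t,·)(x) = m v_O(t) × ω(t) − m ω(t) × (ω(t) × (x − O(t))); since U₃ does not depend on the velocity, this is the full Euler–Lagrange generalized force ∂U₃/∂q − d/dt(∂U₃/∂q̇) produced by U₃. -/

import Mathlib

noncomputable section
open scoped RealInnerProductSpace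

/-- Euclidean 3-space. -/
abbrev E3 : Type := EuclideanSpace ℝ (Fin 3)

/-- Constructor for vectors in `E3` from three coordinates. -/
def vec3 (a b c : ℝ) : E3 := (WithLp.equiv 2 (Fin 3 → ℝ)).symm ![a, b, c]

/-- The cross product on `E3`. -/
def cross3 (a b : E3) : E3 :=
  vec3 (a 1 * b 2 - a 2 * b 1) (a 2 * b 0 - a 0 * b 2) (a 0 * b 1 - a 1 * b 0)

/-- `pderiv3 F j x i` is the partial derivative `∂_j F_i` at `x`. -/
def pderiv3 (F : E3 → E3) (j : Fin 3) (x : E3) (i : Fin 3) : ℝ :=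
  fderiv ℝ F x (EuclideanSpace.single j 1) i

/-- The curl `∇ × F` of a vector field on `E3`:
`(∇×F)_1 = ∂_2 F_3 − ∂_3 F_2`, `(∇×F)_2 = ∂_3 F_1 − ∂_1 F_3`, `(∇×F)_3 = ∂_1 F_2 − ∂_2 F_1`
(written here with 0-based indices). -/
def curl3 (F : E3 → E3) (x : E3) : E3 :=
  vec3 (pderiv3 F 1 x 2 - pderiv3 F 2 x 1)
       (pderiv3 F 2 x 0 - pderiv3 F 0 x 2)
       (pderiv3 F 0 x 1 - pderiv3 F 1 x 0)

/-- The divergence `∇ · F = ∂_1 F_1 + ∂_2 F_2 + ∂_3 F_3` of a vector field on `E3`. -/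
def div3 (F : E3 → E3) (x : E3) : ℝ :=
  pderiv3 F 0 x 0 + pderiv3 F 1 x 1 + pderiv3 F 2 x 2

@[simp] lemma vec3_apply0 (a b c : ℝ) : vec3 a b c 0 = a := rfl
@[simp] lemma vec3_apply1 (a b c : ℝ) : vec3 a b c 1 = b := rfl
@[simp] lemma vec3_apply2 (a b c : ℝ) : vec3 a b c 2 = c := rfl

/-- Cross product with a fixed vector, as a continuous linear map. -/
def crossL (c : E3) : E3 →L[ℝ] E3 :=
  LinearMap.toContinuousLinearMap
    { toFun := fun y => cross3 c y
      map_add' := by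
        intro y z
        ext i
        fin_cases i <;> simp [cross3] <;> ring
      map_smul' := by
        intro r y
        ext i
        fin_cases i <;> simp [cross3] <;> ring }

@[simp] lemma crossL_apply (c y : E3) : crossL c y = cross3 c y := rfl

/-- The key duality computation: the Fréchet derivative of `U₃(t,·)` is the image of the claimed
gradient under the canonical isometry with the dual. -/
lemma toDual_key (v c w : E3) (m : ℝ) :
    (InnerProductSpace.toDual ℝ E3)
      (m • cross3 v c - m • cross3 c w) =
      m • ((innerSL ℝ v).comp (crossL c))
        + (m / 2) • ((2 : ℕ) • (innerSL ℝ w).comp (crossL c)) := by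
  ext h
  simp [InnerProductSpace.toDual_apply_apply, PiLp.inner_apply, RCLike.inner_apply,
    Fin.sum_univ_three, cross3, PiLp.sub_apply, PiLp.smul_apply, smul_eq_mul]
  ring

/-- The velocity-independent potential
`U₃(t,x) = m v_O · (ω × (x − O)) + (m/2)‖ω × (x − O)‖²` has spatial gradient
`m v_O × ω − m ω × (ω × (x − O))`; as `U₃` does not depend on the velocity, this is the full
Euler–Lagrange generalized force produced by `U₃`. -/
theorem grad_U3 (m : ℝ) (hm : 0 < m) (O vO ω : ℝ → E3)
    (hO : Differentiable ℝ O) (hvO : Differentiable ℝ vO) (hω : Differentiable ℝ ω)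
    (hO' : ∀ t, deriv O t = vO t)
    (U3 : ℝ → E3 → ℝ)
    (hU3 : ∀ t x, U3 t x = m * ⟪vO t, cross3 (ω t) (x - O t)⟫
        + (m / 2) * ‖cross3 (ω t) (x - O t)‖ ^ 2)
    (t : ℝ) (x : E3) :
    gradient (U3 t) x
      = m • cross3 (vO t) (ω t) - m • cross3 (ω t) (cross3 (ω t) (x - O t)) := by
  set v := vO t
  set c := ω t
  set p := O t
  set w : E3 := cross3 c (x - p) with hw
  -- The map `y ↦ cross3 c (y - p)` has derivative `crossL c`.
  have h1 : HasFDerivAt (fun y : E3 => cross3 c (y - p)) (crossL c) x := by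
    have := (crossL c).hasFDerivAt.comp x ((hasFDerivAt_id x).sub_const p)
    exact this
  -- Derivative of the full potential.
  have hfd : HasFDerivAt (U3 t)
      (m • ((innerSL ℝ v).comp (crossL c))
        + (m / 2) • ((2 : ℕ) • (innerSL ℝ w).comp (crossL c))) x := by
    have hA : HasFDerivAt (fun y : E3 => m * ⟪v, cross3 c (y - p)⟫)
        (m • ((innerSL ℝ v).comp (crossL c))) x := by
      have := ((innerSL ℝ v).hasFDerivAt.comp x h1).const_mul m
      simpa [smul_smul] using this
    have hB : HasFDerivAt (fun y : E3 => (m / 2) * ‖cross3 c (y - p)‖ ^ 2)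
        ((m / 2) • ((2 : ℕ) • (innerSL ℝ w).comp (crossL c))) x := by
      have := (h1.norm_sq).const_mul (m / 2)
      simpa [hw, smul_smul] using this
    have := hA.add hB
    apply this.congr_of_eventuallyEq
    filter_upwards with y
    rw [hU3]; rfl
  have hgrad : HasGradientAt (U3 t)
      (m • cross3 v c - m • cross3 c w) x := by
    rw [hasGradientAt_iff_hasFDerivAt, toDual_key]
    exact hfd
  exact hgrad.gradient
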